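/- Lower bounds for the probability of necessity PN(k,p,q). Let p ∈ {k+1,…,n} (so p ≠ j for all 1 ≤ j ≤ k) and q ∈ {1,…,n}. Then P(⋂_{j=1}^{k} {Y_j = j} ∩ {X = p} ∩ {Y = q}) ≥ max{ 0, Σ_{j=1}^{k} [ P(Y_j = j) + P(X = j) − P(X = j, Y = j) ] + P(X = p, Y = q) − k }. -/

import Mathlib

open MeasureTheory

lemma inter_lb' {Ω : Type*} [MeasurableSpace Ω] (P : Measure Ω) [IsProbabilityMeasure P]
    {M B : Set Ω} (hB : MeasurableSet B) :
    (P M).toReal + (P B).toReal - 1 ≤ (P (M ∩ B)).toReal := by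
  have h : P M + P B ≤ 1 + P (M ∩ B) := by
    rw [← measure_union_add_inter M hB]
    gcongr
    exact prob_le_one
  have h2 : (P M + P B).toReal ≤ (1 + P (M ∩ B)).toReal :=
    ENNReal.toReal_mono (by simp [measure_ne_top]) h
  rw [ENNReal.toReal_add (measure_ne_top P M) (measure_ne_top P B),
    ENNReal.toReal_add (by norm_num) (measure_ne_top P _), ENNReal.toReal_one] at h2
  linarith

lemma iInter_lb' {Ω : Type*} [MeasurableSpace Ω] (P : Measure Ω) [IsProbabilityMeasure P]
    (s : Finset ℕ) (f : ℕ → Set Ω) (hf : ∀ j ∈ s, MeasurableSet (f j)) :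
    (∑ j ∈ s, (P (f j)).toReal) - ((s.card : ℝ) - 1) ≤ (P (⋂ j ∈ s, f j)).toReal := by
  classical
  induction s using Finset.induction_on with
  | empty => simp
  | @insert a s ha ih =>
    have hfs : ∀ j ∈ s, MeasurableSet (f j) := fun j hj => hf j (Finset.mem_insert_of_mem hj)
    have hmeas : MeasurableSet (⋂ j ∈ s, f j) :=
      MeasurableSet.biInter (Finset.countable_toSet s) hfs
    have h1 := inter_lb' P (M := f a) hmeas
    have h2 := ih hfs
    rw [Finset.set_biInter_insert, Finset.sum_insert ha, Finset.card_insert_of_notMem ha]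
    push_cast
    linarith

theorem pn_kpq_lower_bounds
    {Ω : Type*} [MeasurableSpace Ω] (P : Measure Ω) [IsProbabilityMeasure P]
    (n k : ℕ) (hk1 : 1 ≤ k) (hkn : k ≤ n)
    (X : Ω → ℕ) (Y : ℕ → Ω → ℕ) (Yobs : Ω → ℕ)
    (hX : Measurable X) (hY : ∀ j, Measurable (Y j))
    (hXr : ∀ ω, X ω ∈ Finset.Icc 1 n)
    (hYr : ∀ j ω, Y j ω ∈ Finset.Icc 1 n)
    (hcons : ∀ ω, Yobs ω = Y (X ω) ω)
    (p : ℕ) (hp : p ∈ Finset.Icc (k+1) n)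
    (q : ℕ) (hq : q ∈ Finset.Icc 1 n) :
    max 0
      ((∑ j ∈ Finset.Icc 1 k,
          ((P {ω | Y j ω = j}).toReal + (P {ω | X ω = j}).toReal - (P {ω | X ω = j ∧ Yobs ω = j}).toReal))
        + (P {ω | X ω = p ∧ Yobs ω = q}).toReal - (k : ℝ)) ≤ (P ((⋂ j ∈ Finset.Icc 1 k, {ω | Y j ω = j}) ∩ {ω | X ω = p} ∩ {ω | Yobs ω = q})).toReal := by
  classical
  set A : ℕ → Set Ω := fun j => {ω | Y j ω = j} with hA
  set T : ℕ → Set Ω := fun j => {ω | X ω = j} with hT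
  have hAm : ∀ j, MeasurableSet (A j) := fun j => (hY j) (measurableSet_singleton j)
  have hTm : ∀ j, MeasurableSet (T j) := fun j => hX (measurableSet_singleton j)
  set C : ℕ → Set Ω := fun j => A j ∪ T j with hC
  have hCm : ∀ j, MeasurableSet (C j) := fun j => (hAm j).union (hTm j)
  -- B rewrite
  have hBeq : {ω | X ω = p ∧ Yobs ω = q} = T p ∩ {ω | Y p ω = q} := by
    ext ω
    simp only [Set.mem_setOf_eq, Set.mem_inter_iff, hT]
    constructor
    · rintro ⟨h1, h2⟩; exact ⟨h1, by rw [← h1]; rw [hcons ω] at h2; exact h2⟩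
    · rintro ⟨h1, h2⟩; exact ⟨h1, by rw [hcons ω, h1]; exact h2⟩
  set B : Set Ω := T p ∩ {ω | Y p ω = q} with hB
  have hBm : MeasurableSet B := (hTm p).inter ((hY p) (measurableSet_singleton q))
  -- summand rewrite
  have hsum : ∀ j, (P (A j)).toReal + (P (T j)).toReal - (P {ω | X ω = j ∧ Yobs ω = j}).toReal
      = (P (C j)).toReal := by
    intro j
    have he : {ω | X ω = j ∧ Yobs ω = j} = A j ∩ T j := by
      ext ω
      simp only [Set.mem_setOf_eq, Set.mem_inter_iff, hA, hT]
      constructor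
      · rintro ⟨h1, h2⟩; exact ⟨by rw [hcons ω, h1] at h2; exact h2, h1⟩
      · rintro ⟨h1, h2⟩; exact ⟨h2, by rw [hcons ω, h2]; exact h1⟩
    have hmui : P (A j ∪ T j) + P (A j ∩ T j) = P (A j) + P (T j) :=
      measure_union_add_inter (A j) (hTm j)
    have := congrArg ENNReal.toReal hmui
    rw [ENNReal.toReal_add (measure_ne_top P _) (measure_ne_top P _),
      ENNReal.toReal_add (measure_ne_top P _) (measure_ne_top P _)] at this
    rw [he]
    simp only [hC]
    linarith
  -- final set equality
  have hseteq : (⋂ j ∈ Finset.Icc 1 k, C j) ∩ B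
      = (⋂ j ∈ Finset.Icc 1 k, A j) ∩ {ω | X ω = p} ∩ {ω | Yobs ω = q} := by
    ext ω
    simp only [Set.mem_inter_iff, Set.mem_iInter, Set.mem_setOf_eq, hB, hC, hA, hT,
      Set.mem_union, Finset.mem_Icc]
    have hpk : k + 1 ≤ p := (Finset.mem_Icc.mp hp).1
    constructor
    · rintro ⟨hall, hXp, hYp⟩
      refine ⟨⟨fun j hj => ?_, hXp⟩, ?_⟩
      · rcases hall j hj with h | h
        · exact h
        · exfalso; omega
      · rw [hcons ω, hXp]; exact hYp
    · rintro ⟨⟨hall, hXp⟩, hYq⟩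
      exact ⟨fun j hj => Or.inl (hall j hj), hXp, by rw [hcons ω, hXp] at hYq; exact hYq⟩
  rw [hBeq]
  refine max_le ENNReal.toReal_nonneg ?_
  have hM : MeasurableSet (⋂ j ∈ Finset.Icc 1 k, C j) :=
    MeasurableSet.biInter (Finset.countable_toSet _) (fun j _ => hCm j)
  have h1 := inter_lb' P (M := ⋂ j ∈ Finset.Icc 1 k, C j) hBm
  have h2 := iInter_lb' P (Finset.Icc 1 k) C (fun j _ => hCm j)
  rw [hseteq] at h1
  have hcard : (Finset.Icc 1 k).card = k := by rw [Nat.card_Icc]; omega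
  rw [hcard] at h2
  calc (∑ j ∈ Finset.Icc 1 k,
          ((P (A j)).toReal + (P (T j)).toReal - (P {ω | X ω = j ∧ Yobs ω = j}).toReal))
        + (P B).toReal - (k : ℝ)
      = (∑ j ∈ Finset.Icc 1 k, (P (C j)).toReal) + (P B).toReal - (k : ℝ) := by
        rw [Finset.sum_congr rfl (fun j _ => hsum j)]
    _ ≤ (P (⋂ j ∈ Finset.Icc 1 k, C j)).toReal + (P B).toReal - 1 := by linarith
    _ ≤ _ := h1
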